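/- Let C = C_L ∘ ⋯ ∘ C_1 where the linear maps C_1,…,C_L on 2^n×2^n complex matrices are sampled independently from probability distributions D_1,…,D_L, and for Pauli paths γ = (P_0,…,P_L) ∈ P_n^{L+1} define the Fourier coefficient Φ_γ(C) := Π_{j=1}^L 2^{−n}Tr[P_j C_j(P_{j−1})]. (1) If D_1,…,D_L are locally unbiased and the distribution of the adjoint map C_L† (with C_L ∼ D_L) is also locally unbiased, then for any two paths γ = (P_0,…,P_L) and γ' = (P'_0,…,P'_L) such that supp(P_j) ≠ supp(P'_j) for some j: E[Φ_γ(C)·Φ_{γ'}(C)] = 0. (2) If D_1,…,D_L are Pauli-invariant and the distribution of C_L† is also Pauli-invariant, then for any two distinct paths γ ≠ γ': E[Φ_γ(C)·Φ_{γ'}(C)] = 0. -/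

import Mathlib

open scoped Kronecker
open Matrix
open scoped ComplexOrder

noncomputable section

abbrev QMat := Matrix (Fin 2) (Fin 2) ℂ

abbrev NMat (n : ℕ) := Matrix (Fin n → Fin 2) (Fin n → Fin 2) ℂ

/-- The four single-qubit Pauli matrices `I, X, Y, Z`. -/
def pauli : Fin 4 → QMat :=
  ![1, !![0, 1; 1, 0], !![0, -Complex.I; Complex.I, 0], !![1, 0; 0, -1]]

/-- The non-identity Paulis `X, Y, Z`. -/
def pauliXYZ (i : Fin 3) : QMat := pauli i.succ

/-- The `n`-qubit Pauli string indexed by `s : Fin n → Fin 4`. -/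
def pauliString {n : ℕ} (s : Fin n → Fin 4) : NMat n :=
  Matrix.of fun i j => ∏ k, pauli (s k) (i k) (j k)

/-- Support of a Pauli string. -/
def psupp {n : ℕ} (s : Fin n → Fin 4) : Finset (Fin n) :=
  Finset.univ.filter fun k => s k ≠ 0

/-- The observable with real Pauli coefficients `a`. -/
def obsOf {n : ℕ} (a : (Fin n → Fin 4) → ℝ) : NMat n :=
  ∑ s : Fin n → Fin 4, (a s : ℂ) • pauliString s

/-- Normalized Frobenius norm squared, `‖M‖_F² = Tr[Mᴴ M]/dim`. -/
def frobSq {m : Type*} [Fintype m] (M : Matrix m m ℂ) : ℝ :=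
  (Matrix.trace (Mᴴ * M)).re / (Fintype.card m : ℝ)

def IsUnitary {m : Type*} [Fintype m] [DecidableEq m] (U : Matrix m m ℂ) : Prop :=
  U * Uᴴ = 1 ∧ Uᴴ * U = 1

/-- Hilbert–Schmidt adjoint of a (linear) map on matrices:
`Φ†(A) i j = conj (Tr[Aᴴ Φ(E_{ij})])`. -/
def hsAdj {m : Type*} [Fintype m] [DecidableEq m]
    (Φ : Matrix m m ℂ → Matrix m m ℂ) (A : Matrix m m ℂ) : Matrix m m ℂ :=
  Matrix.of fun i j => (starRingEnd ℂ) (Matrix.trace (Aᴴ * Φ (Matrix.single i j 1)))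

/-- Pauli transfer matrix entry of a single-qubit map. -/
def ptm (Φ : QMat → QMat) (a b : Fin 4) : ℂ :=
  Matrix.trace (pauli a * Φ (pauli b)) / 2

/-- Tensor product `Φ 0 ⊗ Φ 1 ⊗ ⋯ ⊗ Φ (n-1)` of single-qubit (linear) maps,
defined via the Pauli transfer matrices. -/
def tensorMap {n : ℕ} (Φ : Fin n → QMat → QMat) (M : NMat n) : NMat n :=
  ∑ s : Fin n → Fin 4, ∑ t : Fin n → Fin 4,
    ((∏ k, ptm (Φ k) (s k) (t k)) * (Matrix.trace (pauliString t * M) / ((2 : ℂ) ^ n))) •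
      pauliString s

/-- `n`-fold tensor power `Φ^{⊗n}` of a single-qubit (linear) map. -/
def tensorPow (n : ℕ) (Φ : QMat → QMat) : NMat n → NMat n :=
  tensorMap fun _ => Φ

/-- Tensor product of `n` single-qubit matrices. -/
def qprod {n : ℕ} (V : Fin n → QMat) : NMat n :=
  Matrix.of fun i j => ∏ k, V k (i k) (j k)

/-- The single-qubit normal-form map `N'` with parameters `(D, t)`:
`N'(I) = I + Σ t_i σ_i` and `N'(σ_i) = D_i σ_i`. -/
def normalForm (D t : Fin 3 → ℝ) (M : QMat) : QMat :=
  (Matrix.trace M / 2) • (1 + ∑ i, (t i : ℂ) • pauliXYZ i) +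
    ∑ i, ((D i : ℂ) * (Matrix.trace (pauliXYZ i * M) / 2)) • pauliXYZ i

/-- `Υ(D,t) = max_{‖a‖₂=1} Σ_i a_i² D_i² + (Σ_i a_i t_i)²`. -/
def Upsilon (D t : Fin 3 → ℝ) : ℝ :=
  sSup { r : ℝ | ∃ a : Fin 3 → ℝ, (∑ i, a i ^ 2) = 1 ∧
    r = (∑ i, a i ^ 2 * D i ^ 2) + (∑ i, a i * t i) ^ 2 }

/-- Choi matrix of a single-qubit map. -/
def choi (Φ : QMat → QMat) : Matrix (Fin 2 × Fin 2) (Fin 2 × Fin 2) ℂ :=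
  Matrix.of fun p q => Φ (Matrix.single p.1 q.1 1) p.2 q.2

/-- A single-qubit quantum channel: linear, trace preserving, completely positive. -/
structure IsChannel (Φ : QMat → QMat) : Prop where
  linear : IsLinearMap ℂ Φ
  tracePreserving : ∀ M, Matrix.trace (Φ M) = Matrix.trace M
  completelyPositive : (choi Φ).PosSemidef

/-- Unitary 1-design (finitely supported distribution). -/
def IsOneDesign {ι : Type*} [Fintype ι] (w : ι → ℝ) (W : ι → QMat) : Prop :=
  ∀ M : QMat, ∑ i, (w i : ℂ) • (W i * M * (W i)ᴴ) = (Matrix.trace M / 2) • (1 : QMat)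

/-- The swap (flip) operator on two qubits. -/
def swapOp : Matrix (Fin 2 × Fin 2) (Fin 2 × Fin 2) ℂ :=
  Matrix.of fun p q => if p.1 = q.2 ∧ p.2 = q.1 then 1 else 0

/-- Unitary 2-design: the twirl of any `M` matches the Haar value
`c_I • 1 + c_F • F` (closed form of the Haar average on `U(2)`). -/
def IsTwoDesign {ι : Type*} [Fintype ι] (w : ι → ℝ) (W : ι → QMat) : Prop :=
  ∀ M : Matrix (Fin 2 × Fin 2) (Fin 2 × Fin 2) ℂ,
    ∑ i, (w i : ℂ) • ((W i ⊗ₖ W i) * M * (W i ⊗ₖ W i)ᴴ) =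
      ((Matrix.trace M - Matrix.trace (swapOp * M) / 2) / 3) •
          (1 : Matrix (Fin 2 × Fin 2) (Fin 2 × Fin 2) ℂ) +
        ((Matrix.trace (swapOp * M) - Matrix.trace M / 2) / 3) • swapOp

/-- `η`-approximate scrambler (finitely supported distribution over `U(2)`). -/
def IsApproxScrambler {ι : Type*} [Fintype ι] (η : ℝ) (w : ι → ℝ) (U : ι → QMat) : Prop :=
  (∀ a b : Fin 4, a ≠ b →
      ∑ i, (w i : ℂ) • (((U i)ᴴ * pauli a * U i) ⊗ₖ ((U i)ᴴ * pauli b * U i)) = 0) ∧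
    ∀ a b : Fin 3,
      ∑ i, w i * ((Matrix.trace (pauliXYZ a * U i * pauliXYZ b * (U i)ᴴ)).re / 2) ^ 2 ≤
        (1 + 2 * η) / 3

/-- Locally unbiased distribution over linear maps on `n`-qubit matrices. -/
def LocallyUnbiased (n : ℕ) {ι : Type*} [Fintype ι] (w : ι → ℝ)
    (C : ι → NMat n → NMat n) : Prop :=
  ∃ (m : ℕ) (v : Fin n → Fin m → ℝ) (W : Fin n → Fin m → QMat),
    (∀ j k, 0 ≤ v j k) ∧ (∀ j, ∑ k, v j k = 1) ∧ (∀ j k, IsUnitary (W j k)) ∧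
      (∀ j, IsOneDesign (v j) (W j)) ∧
      ∀ A B : NMat n,
        ∑ i, (w i : ℂ) • (C i A ⊗ₖ C i B) =
          ∑ i, ∑ f : Fin n → Fin m,
            ((w i * ∏ j, v j (f j) : ℝ) : ℂ) •
              (C i (qprod (fun j => W j (f j)) * A * (qprod fun j => W j (f j))ᴴ) ⊗ₖ
                C i (qprod (fun j => W j (f j)) * B * (qprod fun j => W j (f j))ᴴ))

/-- Pauli-invariant distribution over linear maps on `n`-qubit matrices. -/
def PauliInvariant (n : ℕ) {ι : Type*} [Fintype ι] (w : ι → ℝ)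
    (C : ι → NMat n → NMat n) : Prop :=
  ∀ A B : NMat n,
    ∑ i, (w i : ℂ) • (C i A ⊗ₖ C i B) =
      ((4 : ℂ) ^ n)⁻¹ • ∑ r : Fin n → Fin 4, ∑ i, (w i : ℂ) •
        (C i (pauliString r * A * pauliString r) ⊗ₖ C i (pauliString r * B * pauliString r))

/-- Fourier coefficient `Φ_γ(C) = Π_j 2^{-n} Tr[P_j C_j(P_{j-1})]` of a Pauli path. -/
def pathCoeff {n L : ℕ} (Cs : Fin L → NMat n → NMat n)
    (γ : Fin (L + 1) → Fin n → Fin 4) : ℂ :=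
  ∏ j : Fin L,
    (Matrix.trace (pauliString (γ j.succ) * Cs j (pauliString (γ j.castSucc))) / ((2 : ℂ) ^ n))

/-- Path weight `|γ| = Σ_{j=1}^L |P_j|`. -/
def pathWeight {n L : ℕ} (γ : Fin (L + 1) → Fin n → Fin 4) : ℕ :=
  ∑ j : Fin L, (psupp (γ j.succ)).card

/-- The (non-physical) map `Ñ_p` with `Ñ_p(I) = (N(I) - pI)/(1-p)` and
`Ñ_p(σ) = N(σ)/(1-p)` for `σ ∈ {X,Y,Z}`. -/
def tildeMap (N : QMat → QMat) (p : ℝ) (M : QMat) : QMat :=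
  (Matrix.trace M / 2) • (((1 : ℂ) - (p : ℂ))⁻¹ • (N 1 - (p : ℂ) • (1 : QMat))) +
    ∑ i : Fin 3, (Matrix.trace (pauliXYZ i * M) / 2) • (((1 : ℂ) - (p : ℂ))⁻¹ • N (pauliXYZ i))

/-- The layers of an `L`-layered noisy circuit: `C_j(ρ) = N^{⊗n}(U_j ρ U_j†)` for `j < L`,
and the last layer is followed by the single-qubit layer `V`. -/
def layerMaps {n L : ℕ} (Nm : QMat → QMat) (U : Fin L → NMat n) (Vt : NMat n)
    (j : Fin L) (ρ : NMat n) : NMat n :=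
  if j.val = L - 1 then Vt * tensorPow n Nm (U j * ρ * (U j)ᴴ) * Vtᴴ
  else tensorPow n Nm (U j * ρ * (U j)ᴴ)

/-- Composition `C_L ∘ ⋯ ∘ C_1` of the layers. -/
def circuitOf {n L : ℕ} (lm : Fin L → NMat n → NMat n) (ρ : NMat n) : NMat n :=
  (List.finRange L).foldl (fun σ j => lm j σ) ρ

/-- Operator (spectral) norm of a matrix, as the `ℓ²→ℓ²` operator norm. -/
def specNorm {m : Type*} [Fintype m] (M : Matrix m m ℂ) : ℝ :=
  Real.sqrt (sSup { r : ℝ | ∃ v : m → ℂ,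
    (∑ x, Complex.normSq (v x)) = 1 ∧ r = ∑ x, Complex.normSq (M.mulVec v x) })

/-- Trace norm `‖M‖₁ = Tr √(Mᴴ M)` (sum of singular values). -/
def traceNorm {m : Type*} [Fintype m] [DecidableEq m] (M : Matrix m m ℂ) : ℝ :=
  (Matrix.trace ((Matrix.posSemidef_conjTranspose_mul_self M).1.eigenvectorUnitary.1 *
    Matrix.diagonal ((fun x : ℝ => (x : ℂ)) ∘ (Real.sqrt ·) ∘ (Matrix.posSemidef_conjTranspose_mul_self M).1.eigenvalues) *
    (star (Matrix.posSemidef_conjTranspose_mul_self M).1.eigenvectorUnitary : Matrix m m ℂ))).re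


/-! ### Auxiliary lemmas for `stmt_10` -/

section Stmt10Aux

/-- sign of single-qubit Pauli conjugation -/
def sgn (a b : Fin 4) : ℂ := if a = 0 ∨ b = 0 ∨ a = b then 1 else -1

lemma pauli_conj_entry (a : Fin 4) (x y : Fin 2) :
    (starRingEnd ℂ) (pauli a x y) = pauli a y x := by
  fin_cases a <;> fin_cases x <;> fin_cases y <;>
    simp [pauli, Matrix.one_apply]

lemma pauli_mul_pauli_mul (a b : Fin 4) :
    pauli a * pauli b * pauli a = sgn a b • pauli b := by
  fin_cases a <;> fin_cases b <;>
    (ext x y; fin_cases x <;> fin_cases y <;>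
      simp [pauli, sgn, Matrix.mul_apply, Fin.sum_univ_two, Matrix.one_apply])

lemma sgn_sum (b c : Fin 4) :
    ∑ a : Fin 4, sgn a b * sgn a c = if b = c then 4 else 0 := by
  fin_cases b <;> fin_cases c <;>
    simp +decide [sgn, Fin.sum_univ_four] <;> norm_num

lemma pauli_trace (a : Fin 4) :
    Matrix.trace (pauli a) = if a = 0 then 2 else 0 := by
  fin_cases a <;> simp [pauli, Matrix.trace, Fin.sum_univ_two, Matrix.one_apply]

lemma qprod_mul {n : ℕ} (V W : Fin n → QMat) :
    qprod V * qprod W = qprod fun k => V k * W k := by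
  ext i j
  simp only [qprod, Matrix.mul_apply, Matrix.of_apply, ← Finset.prod_mul_distrib]
  exact (Fintype.prod_sum fun k y => V k (i k) y * W k y (j k)).symm

lemma qprod_conjTranspose {n : ℕ} (V : Fin n → QMat) :
    (qprod V)ᴴ = qprod fun k => (V k)ᴴ := by
  ext i j
  simp [qprod, Matrix.conjTranspose_apply, map_prod]

lemma qprod_smul {n : ℕ} (c : Fin n → ℂ) (V : Fin n → QMat) :
    qprod (fun k => c k • V k) = (∏ k, c k) • qprod V := by
  ext i j
  simp [qprod, Finset.prod_mul_distrib, smul_eq_mul]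

lemma pauliString_eq_qprod {n : ℕ} (s : Fin n → Fin 4) :
    pauliString s = qprod fun k => pauli (s k) := rfl

lemma pauliString_herm {n : ℕ} (s : Fin n → Fin 4) :
    (pauliString s)ᴴ = pauliString s := by
  ext i j
  simp [pauliString, Matrix.conjTranspose_apply, map_prod, pauli_conj_entry]

lemma pauliString_conj {n : ℕ} (r s : Fin n → Fin 4) :
    pauliString r * pauliString s * pauliString r
      = (∏ k, sgn (r k) (s k)) • pauliString s := by
  simp only [pauliString_eq_qprod, qprod_mul]
  rw [← qprod_smul]
  have : (fun k => pauli (r k) * pauli (s k) * pauli (r k))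
      = fun k => sgn (r k) (s k) • pauli (s k) :=
    funext fun k => pauli_mul_pauli_mul (r k) (s k)
  rw [this]

lemma sgn_prod_sum {n : ℕ} {s t : Fin n → Fin 4} (h : s ≠ t) :
    ∑ r : Fin n → Fin 4, (∏ k, sgn (r k) (s k)) * (∏ k, sgn (r k) (t k)) = 0 := by
  have h2 : ∀ r : Fin n → Fin 4, (∏ k, sgn (r k) (s k)) * (∏ k, sgn (r k) (t k))
      = ∏ k, sgn (r k) (s k) * sgn (r k) (t k) := fun r => (Finset.prod_mul_distrib).symm
  simp_rw [h2]
  rw [← Fintype.prod_sum (fun k a => sgn a (s k) * sgn a (t k))]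
  apply Finset.prod_eq_zero (Finset.mem_univ (Classical.choose (Function.ne_iff.1 h)))
  rw [sgn_sum, if_neg (Classical.choose_spec (Function.ne_iff.1 h))]

section PairMap

variable {m : Type*} [Fintype m] [DecidableEq m]

lemma decomp {Φ : Matrix m m ℂ → Matrix m m ℂ} (hΦ : IsLinearMap ℂ Φ) (M : Matrix m m ℂ) :
    Φ M = ∑ p : m × m, M p.1 p.2 • Φ (Matrix.single p.1 p.2 1) := by
  have key : ∀ N : Matrix m m ℂ,
      Φ (∑ p : m × m, N p.1 p.2 • Matrix.single p.1 p.2 (1 : ℂ))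
        = ∑ p : m × m, N p.1 p.2 • Φ (Matrix.single p.1 p.2 1) := by
    intro N
    rw [show Φ = (IsLinearMap.mk' Φ hΦ : Matrix m m ℂ →ₗ[ℂ] Matrix m m ℂ) from rfl, map_sum]
    exact Finset.sum_congr rfl fun p _ => LinearMap.map_smul _ _ _
  have hM : M = ∑ p : m × m, M p.1 p.2 • Matrix.single p.1 p.2 (1 : ℂ) := by
    conv_lhs => rw [Matrix.matrix_eq_sum_single M]
    rw [Fintype.sum_prod_type]
    refine Finset.sum_congr rfl fun i _ => Finset.sum_congr rfl fun j _ => ?_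
    rw [Matrix.smul_single, smul_eq_mul, mul_one]
  conv_lhs => rw [hM]
  exact key M

lemma hsAdj_linear (Φ : Matrix m m ℂ → Matrix m m ℂ) : IsLinearMap ℂ (hsAdj Φ) := by
  constructor
  · intro A B
    ext i j
    simp [hsAdj, Matrix.conjTranspose_add, Matrix.add_mul]
  · intro c A
    ext i j
    simp [hsAdj, Matrix.conjTranspose_smul, Matrix.smul_mul, smul_eq_mul, mul_comm]

lemma trace_hsAdj {Φ : Matrix m m ℂ → Matrix m m ℂ} (hΦ : IsLinearMap ℂ Φ)
    {P Q : Matrix m m ℂ} (hP : Pᴴ = P) (hQ : Qᴴ = Q) :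
    Matrix.trace (Q * Φ P) = (starRingEnd ℂ) (Matrix.trace (P * hsAdj Φ Q)) := by
  have hPc : ∀ x y, (starRingEnd ℂ) (P x y) = P y x := fun x y => by
    conv_rhs => rw [← hP, Matrix.conjTranspose_apply]
    rfl
  have h1 : Matrix.trace (P * hsAdj Φ Q)
      = ∑ x, ∑ y, P x y *
          (starRingEnd ℂ) (Matrix.trace (Qᴴ * Φ (Matrix.single y x 1))) := by
    simp [Matrix.trace, Matrix.mul_apply, hsAdj, Matrix.diag]
  rw [h1, hQ, decomp hΦ P, Matrix.mul_sum, Matrix.trace_sum]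
  simp only [Matrix.mul_smul, Matrix.trace_smul, smul_eq_mul, map_sum, _root_.map_mul,
    Complex.conj_conj]
  rw [Fintype.sum_prod_type, Finset.sum_comm]
  exact Finset.sum_congr rfl fun x _ => Finset.sum_congr rfl fun y _ => by rw [hPc]

lemma sum2 (F : m → m → ℂ) : (∑ u : m × m, F u.1 u.2) = ∑ a, ∑ b, F a b :=
  Fintype.sum_prod_type _

lemma sum4 (F : m → m → m → m → ℂ) :
    (∑ p : m × m, ∑ q : m × m, F p.1 q.1 p.2 q.2) = ∑ a, ∑ b, ∑ c, ∑ d, F a b c d := by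
  rw [Fintype.sum_prod_type]
  refine Finset.sum_congr rfl fun a _ => ?_
  have h : ∀ c : m, (∑ q : m × m, F a q.1 c q.2) = ∑ b, ∑ d, F a b c d := fun c =>
    Fintype.sum_prod_type _
  simp_rw [h]
  exact Finset.sum_comm

def pairMap (C C' : Matrix m m ℂ → Matrix m m ℂ)
    (M : Matrix (m × m) (m × m) ℂ) : Matrix (m × m) (m × m) ℂ :=
  ∑ p : m × m, ∑ q : m × m, M p q •
    (C (Matrix.single p.1 q.1 1) ⊗ₖ C' (Matrix.single p.2 q.2 1))

lemma pairMap_kron {C C' : Matrix m m ℂ → Matrix m m ℂ}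
    (hC : IsLinearMap ℂ C) (hC' : IsLinearMap ℂ C') (X Y : Matrix m m ℂ) :
    pairMap C C' (X ⊗ₖ Y) = C X ⊗ₖ C' Y := by
  ext x y
  conv_rhs => rw [decomp hC X, decomp hC' Y]
  simp only [pairMap, Matrix.sum_apply, Matrix.smul_apply, Matrix.kroneckerMap_apply,
    smul_eq_mul]
  rw [sum4 (fun a b c d => X a b * Y c d *
    (C (Matrix.single a b 1) x.1 y.1 * C' (Matrix.single c d 1) x.2 y.2))]
  rw [Fintype.sum_mul_sum]
  rw [sum2 (fun a b => ∑ v : m × m, X a b * C (Matrix.single a b 1) x.1 y.1 *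
    (Y v.1 v.2 * C' (Matrix.single v.1 v.2 1) x.2 y.2))]
  refine Finset.sum_congr rfl fun a _ => Finset.sum_congr rfl fun b _ => ?_
  rw [sum2 (fun c d => X a b * C (Matrix.single a b 1) x.1 y.1 *
    (Y c d * C' (Matrix.single c d 1) x.2 y.2))]
  refine Finset.sum_congr rfl fun c _ => Finset.sum_congr rfl fun d _ => by ring

lemma pairMap_zero (C C' : Matrix m m ℂ → Matrix m m ℂ) : pairMap C C' 0 = 0 := by
  simp [pairMap]

lemma sum_rot {A B C : Type*} [Fintype A] [Fintype B] [Fintype C] (g : A → B → C → ℂ) :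
    (∑ p : A, ∑ q : B, ∑ f : C, g p q f) = ∑ f, ∑ p, ∑ q, g p q f := by
  rw [show (∑ p : A, ∑ q : B, ∑ f : C, g p q f) = ∑ p, ∑ f, ∑ q, g p q f from
    Finset.sum_congr rfl fun p _ => Finset.sum_comm]
  exact Finset.sum_comm

lemma pairMap_sum_smul {κ : Type*} [Fintype κ] (C C' : Matrix m m ℂ → Matrix m m ℂ)
    (c : κ → ℂ) (Z : κ → Matrix (m × m) (m × m) ℂ) :
    pairMap C C' (∑ f, c f • Z f) = ∑ f, c f • pairMap C C' (Z f) := by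
  ext x y
  simp only [pairMap, Matrix.sum_apply, Matrix.smul_apply, smul_eq_mul, Finset.sum_mul,
    Finset.mul_sum]
  rw [sum_rot]
  exact Finset.sum_congr rfl fun f _ => Finset.sum_congr rfl fun p _ =>
    Finset.sum_congr rfl fun q _ => by ring

lemma kron_transfer {κ : Type*} [Fintype κ] {C C' : Matrix m m ℂ → Matrix m m ℂ}
    (hC : IsLinearMap ℂ C) (hC' : IsLinearMap ℂ C')
    (c : κ → ℂ) (X Y : κ → Matrix m m ℂ)
    (h : ∑ f, c f • (X f ⊗ₖ Y f) = 0) :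
    ∑ f, c f • (C (X f) ⊗ₖ C' (Y f)) = 0 := by
  have h2 : ∀ f, C (X f) ⊗ₖ C' (Y f) = pairMap C C' (X f ⊗ₖ Y f) :=
    fun f => (pairMap_kron hC hC' _ _).symm
  simp_rw [h2]
  rw [← pairMap_sum_smul, h, pairMap_zero]

end PairMap

lemma trace_pair {n : ℕ} {ι : Type*} [Fintype ι] (w : ι → ℝ) (X Y : ι → NMat n)
    (Q Q' : NMat n) :
    ∑ i, (w i : ℂ) * (Matrix.trace (Q * X i) * Matrix.trace (Q' * Y i))
      = Matrix.trace ((Q ⊗ₖ Q') * ∑ i, (w i : ℂ) • (X i ⊗ₖ Y i)) := by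
  rw [Matrix.mul_sum, Matrix.trace_sum]
  refine Finset.sum_congr rfl fun i _ => ?_
  rw [Matrix.mul_smul, ← Matrix.mul_kronecker_mul, Matrix.trace_smul, Matrix.trace_kronecker,
    smul_eq_mul]

lemma PI_forward {n : ℕ} {ι : Type*} [Fintype ι] {w : ι → ℝ} {C : ι → NMat n → NMat n}
    (hPI : PauliInvariant n w C) (hlin : ∀ i, IsLinearMap ℂ (C i))
    {s t : Fin n → Fin 4} (hst : s ≠ t) :
    ∑ i, (w i : ℂ) • (C i (pauliString s) ⊗ₖ C i (pauliString t)) = 0 := by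
  rw [hPI (pauliString s) (pauliString t)]
  have hterm : ∀ r : Fin n → Fin 4, ∀ i : ι,
      C i (pauliString r * pauliString s * pauliString r) ⊗ₖ
        C i (pauliString r * pauliString t * pauliString r)
      = ((∏ k, sgn (r k) (s k)) * (∏ k, sgn (r k) (t k))) •
          (C i (pauliString s) ⊗ₖ C i (pauliString t)) := by
    intro r i
    rw [pauliString_conj, pauliString_conj, (hlin i).map_smul, (hlin i).map_smul,
      Matrix.smul_kronecker, Matrix.kronecker_smul, smul_smul]
  simp_rw [hterm, smul_comm ((w _ : ℂ))]
  simp_rw [← Finset.smul_sum]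
  rw [← Finset.sum_smul, sgn_prod_sum hst, zero_smul, smul_zero]

lemma LU_forward {n : ℕ} {ι : Type*} [Fintype ι] {w : ι → ℝ} {C : ι → NMat n → NMat n}
    (hLU : LocallyUnbiased n w C) (hlin : ∀ i, IsLinearMap ℂ (C i))
    {s t : Fin n → Fin 4} (hst : psupp s ≠ psupp t) :
    ∑ i, (w i : ℂ) • (C i (pauliString s) ⊗ₖ C i (pauliString t)) = 0 := by
  obtain ⟨m, v, W, hv0, hv1, hWu, h1d, hmain⟩ := hLU
  rw [hmain (pauliString s) (pauliString t)]
  -- key: the twirled pair averages to zero before applying the maps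
  obtain ⟨k₀, hk₀⟩ : ∃ k, ¬ ((s k ≠ 0) ↔ (t k ≠ 0)) := by
    by_contra hc
    push_neg at hc
    exact hst (by
      apply Finset.ext
      intro k
      simp only [psupp, Finset.mem_filter, Finset.mem_univ, true_and]
      exact hc k)
  have key : ∑ f : Fin n → Fin m, ((∏ j, v j (f j) : ℝ) : ℂ) •
      ((qprod (fun j => W j (f j)) * pauliString s * (qprod fun j => W j (f j))ᴴ) ⊗ₖ
       (qprod (fun j => W j (f j)) * pauliString t * (qprod fun j => W j (f j))ᴴ)) = 0 := by
    have hX : ∀ (u : Fin n → Fin 4) (f : Fin n → Fin m),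
        qprod (fun j => W j (f j)) * pauliString u * (qprod fun j => W j (f j))ᴴ
          = qprod fun k => W k (f k) * pauli (u k) * (W k (f k))ᴴ := by
      intro u f
      rw [pauliString_eq_qprod, qprod_conjTranspose, qprod_mul, qprod_mul]
    simp_rw [hX]
    ext x y
    simp only [Matrix.sum_apply, Matrix.smul_apply, Matrix.kroneckerMap_apply, smul_eq_mul,
      Matrix.zero_apply, qprod, Matrix.of_apply, Complex.ofReal_prod]
    have hcomb : ∀ f : Fin n → Fin m,
        (∏ j, ((v j (f j) : ℝ) : ℂ)) *
          ((∏ k, (W k (f k) * pauli (s k) * (W k (f k))ᴴ) (x.1 k) (y.1 k)) *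
           (∏ k, (W k (f k) * pauli (t k) * (W k (f k))ᴴ) (x.2 k) (y.2 k)))
        = ∏ k, (((v k (f k) : ℝ) : ℂ) *
            ((W k (f k) * pauli (s k) * (W k (f k))ᴴ) (x.1 k) (y.1 k) *
             (W k (f k) * pauli (t k) * (W k (f k))ᴴ) (x.2 k) (y.2 k))) := by
      intro f
      rw [← Finset.prod_mul_distrib, ← Finset.prod_mul_distrib]
    simp_rw [hcomb]
    rw [← Fintype.prod_sum (fun k a => ((v k a : ℝ) : ℂ) *
      ((W k a * pauli (s k) * (W k a)ᴴ) (x.1 k) (y.1 k) *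
       (W k a * pauli (t k) * (W k a)ᴴ) (x.2 k) (y.2 k)))]
    apply Finset.prod_eq_zero (Finset.mem_univ k₀)
    have hzero : ∀ (u : Fin 4), u ≠ 0 → ∀ (a b : Fin 2),
        ∑ c : Fin m, ((v k₀ c : ℝ) : ℂ) * (W k₀ c * pauli u * (W k₀ c)ᴴ) a b = 0 := by
      intro u hu a b
      have h := h1d k₀ (pauli u)
      have h2 := congrArg (fun M : QMat => M a b) h
      simp only [Matrix.sum_apply, Matrix.smul_apply, smul_eq_mul, Matrix.smul_apply,
        pauli_trace, if_neg hu, zero_div, zero_smul, Matrix.zero_apply] at h2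
      simpa using h2
    by_cases hs0 : s k₀ = 0
    · -- s k₀ = 0
      have ht0 : t k₀ ≠ 0 := fun h0 => hk₀ (by simp [hs0, h0])
      have hone : ∀ c : Fin m, (W k₀ c * pauli (s k₀) * (W k₀ c)ᴴ) (x.1 k₀) (y.1 k₀)
          = (1 : QMat) (x.1 k₀) (y.1 k₀) := by
        intro c
        rw [hs0, show pauli 0 = (1 : QMat) from rfl, mul_one, (hWu k₀ c).1]
      simp_rw [hone]
      have hz := hzero (t k₀) ht0 (x.2 k₀) (y.2 k₀)
      calc ∑ c : Fin m, ((v k₀ c : ℝ) : ℂ) *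
            ((1 : QMat) (x.1 k₀) (y.1 k₀) *
             (W k₀ c * pauli (t k₀) * (W k₀ c)ᴴ) (x.2 k₀) (y.2 k₀))
          = (1 : QMat) (x.1 k₀) (y.1 k₀) *
            ∑ c : Fin m, ((v k₀ c : ℝ) : ℂ) *
              (W k₀ c * pauli (t k₀) * (W k₀ c)ᴴ) (x.2 k₀) (y.2 k₀) := by
            rw [Finset.mul_sum]; exact Finset.sum_congr rfl fun c _ => by ring
        _ = 0 := by rw [hz, mul_zero]
    · -- s k₀ ≠ 0, hence t k₀ = 0
      have ht : t k₀ = 0 := by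
        by_contra h0
        exact hk₀ (iff_of_true hs0 h0)
      have hone : ∀ c : Fin m, (W k₀ c * pauli (t k₀) * (W k₀ c)ᴴ) (x.2 k₀) (y.2 k₀)
          = (1 : QMat) (x.2 k₀) (y.2 k₀) := by
        intro c
        rw [ht, show pauli 0 = (1 : QMat) from rfl, mul_one, (hWu k₀ c).1]
      simp_rw [hone]
      have hz := hzero (s k₀) hs0 (x.1 k₀) (y.1 k₀)
      calc ∑ c : Fin m, ((v k₀ c : ℝ) : ℂ) *
            ((W k₀ c * pauli (s k₀) * (W k₀ c)ᴴ) (x.1 k₀) (y.1 k₀) *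
             (1 : QMat) (x.2 k₀) (y.2 k₀))
          = (∑ c : Fin m, ((v k₀ c : ℝ) : ℂ) *
              (W k₀ c * pauli (s k₀) * (W k₀ c)ᴴ) (x.1 k₀) (y.1 k₀)) *
              (1 : QMat) (x.2 k₀) (y.2 k₀) := by
            rw [Finset.sum_mul]; exact Finset.sum_congr rfl fun c _ => by ring
        _ = 0 := by rw [hz, zero_mul]
  refine Finset.sum_eq_zero fun i _ => ?_
  have hcast : ∀ f : Fin n → Fin m, ((w i * ∏ j, v j (f j) : ℝ) : ℂ)
      = (w i : ℂ) * ((∏ j, v j (f j) : ℝ) : ℂ) := fun f => by push_cast; ring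
  simp_rw [hcast, mul_smul]
  rw [← Finset.smul_sum]
  rw [kron_transfer (hlin i) (hlin i) _ _ _ key, smul_zero]

lemma layer_zero {n : ℕ} {ι : Type*} [Fintype ι] (w : ι → ℝ) (C : ι → NMat n → NMat n)
    (Q Q' P P' : NMat n)
    (h : ∑ i, (w i : ℂ) • (C i P ⊗ₖ C i P') = 0) :
    ∑ i, (w i : ℂ) * (Matrix.trace (Q * C i P) / (2:ℂ)^n *
      (Matrix.trace (Q' * C i P') / (2:ℂ)^n)) = 0 := by
  have hre : ∀ i, (w i : ℂ) * (Matrix.trace (Q * C i P) / (2:ℂ)^n *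
      (Matrix.trace (Q' * C i P') / (2:ℂ)^n))
      = ((2:ℂ)^n * (2:ℂ)^n)⁻¹ *
        ((w i : ℂ) * (Matrix.trace (Q * C i P) * Matrix.trace (Q' * C i P'))) := by
    intro i
    field_simp
  simp_rw [hre]
  rw [← Finset.mul_sum, trace_pair, h, Matrix.mul_zero, Matrix.trace_zero, mul_zero]

lemma layer_zero_adj {n : ℕ} {ι : Type*} [Fintype ι] (w : ι → ℝ) (C : ι → NMat n → NMat n)
    (hlin : ∀ i, IsLinearMap ℂ (C i))
    (Q Q' P P' : NMat n) (hQ : Qᴴ = Q) (hQ' : Q'ᴴ = Q') (hP : Pᴴ = P) (hP' : P'ᴴ = P')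
    (h : ∑ i, (w i : ℂ) • (hsAdj (C i) Q ⊗ₖ hsAdj (C i) Q') = 0) :
    ∑ i, (w i : ℂ) * (Matrix.trace (Q * C i P) / (2:ℂ)^n *
      (Matrix.trace (Q' * C i P') / (2:ℂ)^n)) = 0 := by
  have hre : ∀ i, (w i : ℂ) * (Matrix.trace (Q * C i P) / (2:ℂ)^n *
      (Matrix.trace (Q' * C i P') / (2:ℂ)^n))
      = ((2:ℂ)^n * (2:ℂ)^n)⁻¹ * (starRingEnd ℂ)
        ((w i : ℂ) * (Matrix.trace (P * hsAdj (C i) Q) *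
          Matrix.trace (P' * hsAdj (C i) Q'))) := by
    intro i
    rw [trace_hsAdj (hlin i) hP hQ, trace_hsAdj (hlin i) hP' hQ']
    simp only [_root_.map_mul, Complex.conj_ofReal]
    field_simp
  simp_rw [hre]
  rw [← Finset.mul_sum, ← map_sum, trace_pair w (fun i => hsAdj (C i) Q)
    (fun i => hsAdj (C i) Q') P P', h, Matrix.mul_zero, Matrix.trace_zero, map_zero, mul_zero]

lemma factorize {n L : ℕ} {ι : Type*} [Fintype ι] (w : Fin L → ι → ℝ)
    (C : Fin L → ι → NMat n → NMat n) (γ γ' : Fin (L + 1) → Fin n → Fin 4) :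
    ∑ f : Fin L → ι, ((∏ j, w j (f j) : ℝ) : ℂ) *
        (pathCoeff (fun j => C j (f j)) γ * pathCoeff (fun j => C j (f j)) γ')
    = ∏ j : Fin L, ∑ i, (w j i : ℂ) *
        (Matrix.trace (pauliString (γ j.succ) * C j i (pauliString (γ j.castSucc))) / (2:ℂ)^n *
         (Matrix.trace (pauliString (γ' j.succ) * C j i (pauliString (γ' j.castSucc)))
           / (2:ℂ)^n)) := by
  rw [Fintype.prod_sum]
  refine Finset.sum_congr rfl fun f _ => ?_
  rw [pathCoeff, pathCoeff]
  push_cast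
  rw [← Finset.prod_mul_distrib, ← Finset.prod_mul_distrib]

end Stmt10Aux

/-- (Orthogonality of Pauli paths.) For an `L`-layered random circuit
with independently sampled layers: (1) if all layer distributions and the distribution of
the adjoint of the last layer are locally unbiased, then Fourier coefficients of paths
with different supports are uncorrelated; (2) if they are Pauli-invariant, then Fourier
coefficients of distinct paths are uncorrelated. -/
theorem stmt_10 (n L : ℕ) (hL : 0 < L) {ι : Type*} [Fintype ι]
    (w : Fin L → ι → ℝ) (C : Fin L → ι → NMat n → NMat n)
    (hw0 : ∀ j i, 0 ≤ w j i) (hw1 : ∀ j, ∑ i, w j i = 1)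
    (hlin : ∀ j i, IsLinearMap ℂ (C j i)) :
    ((∀ j, LocallyUnbiased n (w j) (C j)) →
      LocallyUnbiased n (w ⟨L - 1, Nat.sub_lt hL Nat.one_pos⟩)
        (fun i => hsAdj (C ⟨L - 1, Nat.sub_lt hL Nat.one_pos⟩ i)) →
      ∀ γ γ' : Fin (L + 1) → Fin n → Fin 4,
        (∃ j, psupp (γ j) ≠ psupp (γ' j)) →
        ∑ f : Fin L → ι, ((∏ j, w j (f j) : ℝ) : ℂ) *
            (pathCoeff (fun j => C j (f j)) γ * pathCoeff (fun j => C j (f j)) γ') = 0) ∧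
    ((∀ j, PauliInvariant n (w j) (C j)) →
      PauliInvariant n (w ⟨L - 1, Nat.sub_lt hL Nat.one_pos⟩)
        (fun i => hsAdj (C ⟨L - 1, Nat.sub_lt hL Nat.one_pos⟩ i)) →
      ∀ γ γ' : Fin (L + 1) → Fin n → Fin 4, γ ≠ γ' →
        ∑ f : Fin L → ι, ((∏ j, w j (f j) : ℝ) : ℂ) *
            (pathCoeff (fun j => C j (f j)) γ * pathCoeff (fun j => C j (f j)) γ') = 0) := by
  have hL1 : (⟨L - 1, Nat.sub_lt hL Nat.one_pos⟩ : Fin L).succ = Fin.last L := by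
    ext
    simp [Fin.succ, Fin.last]
    omega
  constructor
  · intro hLU hLUadj γ γ' hdiff
    obtain ⟨j, hj⟩ := hdiff
    rw [factorize]
    by_cases hjL : (j : ℕ) < L
    · refine Finset.prod_eq_zero (Finset.mem_univ (⟨(j : ℕ), hjL⟩ : Fin L)) ?_
      apply layer_zero
      have hcs : Fin.castSucc (⟨(j : ℕ), hjL⟩ : Fin L) = j := by ext; rfl
      apply LU_forward (hLU _) (fun i => hlin _ i)
      rw [hcs]
      exact hj
    · have hjeq : j = Fin.last L := by
        ext
        have := j.isLt
        simp only [Fin.last]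
        omega
      refine Finset.prod_eq_zero
        (Finset.mem_univ (⟨L - 1, Nat.sub_lt hL Nat.one_pos⟩ : Fin L)) ?_
      apply layer_zero_adj _ _ (fun i => hlin _ i) _ _ _ _
        (pauliString_herm _) (pauliString_herm _) (pauliString_herm _) (pauliString_herm _)
      apply LU_forward hLUadj (fun i => hsAdj_linear _)
      rw [hL1, ← hjeq]
      exact hj
  · intro hPI hPIadj γ γ' hne
    obtain ⟨j, hj⟩ := Function.ne_iff.1 hne
    rw [factorize]
    by_cases hjL : (j : ℕ) < L
    · refine Finset.prod_eq_zero (Finset.mem_univ (⟨(j : ℕ), hjL⟩ : Fin L)) ?_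
      apply layer_zero
      have hcs : Fin.castSucc (⟨(j : ℕ), hjL⟩ : Fin L) = j := by ext; rfl
      apply PI_forward (hPI _) (fun i => hlin _ i)
      rw [hcs]
      exact hj
    · have hjeq : j = Fin.last L := by
        ext
        have := j.isLt
        simp only [Fin.last]
        omega
      refine Finset.prod_eq_zero
        (Finset.mem_univ (⟨L - 1, Nat.sub_lt hL Nat.one_pos⟩ : Fin L)) ?_
      apply layer_zero_adj _ _ (fun i => hlin _ i) _ _ _ _
        (pauliString_herm _) (pauliString_herm _) (pauliString_herm _) (pauliString_herm _)
      apply PI_forward hPIadj (fun i => hsAdj_linear _)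
      rw [hL1, ← hjeq]
      exact hj


end
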